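/- arXiv:1002.0777 — 2 statements merged into one kernel-verified Lean document; each statement's English description precedes it below -/
import Mathlib

section
/- Let X[1],…,X[m] be mutually independent random variables with values in finite alphabets, and let Y be the output of a multiple access channel on input X[E_m] = (X[1],…,X[m]). Then the function ρ : 2^{E_m} → ℝ defined by ρ(S) = I(X[S]; Y, X[S^c]) is a polymatroid rank function: ρ(∅) = 0, ρ(J) ≤ ρ(K) whenever J ⊆ K ⊆ E_m, and ρ(J ∪ K) + ρ(J ∩ K) ≤ ρ(J) + ρ(K) for all J, K ⊆ E_m. -/
/-!
Polar codes for the m-user MAC (Abbe–Telatar), Statement 5: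
For mutually independent inputs `X[1], …, X[m]` with values in finite alphabets and a MAC
output `Y`, the function `ρ(S) = I(X[S]; Y, X[Sᶜ])` is a polymatroid rank function:
`ρ(∅) = 0`, `ρ` is monotone under inclusion, and `ρ` is submodular.
-/

/-- Binary (base 2) Shannon entropy of a finitely supported distribution. -/
noncomputable def H2 {Ω : Type*} [Fintype Ω] (p : Ω → ℝ) : ℝ :=
  -∑ ω, p ω * Real.logb 2 (p ω)

open scoped Classical in
/-- Marginal distribution of the push-forward of `p` under `f`. -/
noncomputable def marg {Ω A : Type*} [Fintype Ω] (p : Ω → ℝ) (f : Ω → A) (a : A) : ℝ :=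
  ∑ ω, if f ω = a then p ω else 0

/-- Mutual information (in bits) between `f` and `g` under the joint distribution `p`. -/
noncomputable def mi {Ω A B : Type*} [Fintype Ω] [Fintype A] [Fintype B]
    (p : Ω → ℝ) (f : Ω → A) (g : Ω → B) : ℝ :=
  H2 (marg p f) + H2 (marg p g) - H2 (marg p fun ω => (f ω, g ω))

/-- `W` is a bona fide transition probability kernel (channel), `W x y = P(y | x)`. -/
def IsChannel {α Y : Type*} [Fintype Y] (W : α → Y → ℝ) : Prop :=
  (∀ x y, 0 ≤ W x y) ∧ ∀ x, ∑ y, W x y = 1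

/-- Joint law of `(X[E_m], Y)` where the inputs `X[i] ∼ p i` are mutually independent and
`Y` is the output of the MAC `W` on input `X[E_m]`. -/
noncomputable def macJoint {m : ℕ} {𝒳 : Fin m → Type*} {Y : Type*}
    (p : ∀ i, 𝒳 i → ℝ) (W : (∀ i, 𝒳 i) → Y → ℝ) : (∀ i, 𝒳 i) × Y → ℝ :=
  fun q => (∏ i, p i (q.1 i)) * W q.1 q.2

/-- `ρ(S) = I(X[S]; Y, X[Sᶜ])`. -/
noncomputable def macRho {m : ℕ} {𝒳 : Fin m → Type*} [∀ i, Fintype (𝒳 i)] {Y : Type*}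
    [Fintype Y] (p : ∀ i, 𝒳 i → ℝ) (W : (∀ i, 𝒳 i) → Y → ℝ) (S : Finset (Fin m)) : ℝ :=
  mi (macJoint p W) (fun q => fun i : {i // i ∈ S} => q.1 i.1)
    (fun q => (q.2, fun i : {i // i ∈ Sᶜ} => q.1 i.1))

set_option linter.unusedSectionVars false

section EntropyToolkit

variable {Ω A B C : Type*} [Fintype Ω] [Fintype A] [Fintype B] [Fintype C]

/-- Natural-log entropy. -/
noncomputable def Hn {A : Type*} [Fintype A] (q : A → ℝ) : ℝ := ∑ a, Real.negMulLog (q a)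

lemma Hn_eq (q : A → ℝ) : Hn q = -∑ a, q a * Real.log (q a) := by
  simp [Hn, Real.negMulLog]

lemma H2_eq (q : A → ℝ) : H2 q = Hn q / Real.log 2 := by
  rw [Hn_eq, H2, neg_div, neg_inj, Finset.sum_div]
  exact Finset.sum_congr rfl fun a _ => by rw [Real.logb, mul_div_assoc]

lemma marg_nonneg (p : Ω → ℝ) (hp0 : ∀ ω, 0 ≤ p ω) (f : Ω → A) (a : A) :
    0 ≤ marg p f a := by
  unfold marg
  exact Finset.sum_nonneg fun ω _ => by by_cases h : f ω = a <;> simp [h, hp0 ω]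

lemma sum_marg (p : Ω → ℝ) (f : Ω → A) : ∑ a, marg p f a = ∑ ω, p ω := by
  unfold marg
  rw [Finset.sum_comm]
  refine Finset.sum_congr rfl fun ω _ => ?_
  rw [Finset.sum_eq_single (f ω)]
  · simp
  · intro a _ ha
    exact if_neg fun e => ha e.symm
  · simp

lemma marg_mono (p : Ω → ℝ) (hp0 : ∀ ω, 0 ≤ p ω) {F : Ω → A} {G : Ω → B}
    (π : A → B) (hπ : ∀ ω, π (F ω) = G ω) (a : A) :
    marg p F a ≤ marg p G (π a) := by
  unfold marg
  refine Finset.sum_le_sum fun ω _ => ?_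
  by_cases h : F ω = a
  · have h2 : G ω = π a := by rw [← hπ ω, h]
    simp [h, h2]
  · by_cases h2 : G ω = π a <;> simp [h, h2, hp0 ω]

lemma sum_marg_fst (p : Ω → ℝ) (F : Ω → A) (G : Ω → B) (a : A) :
    ∑ b, marg p (fun ω => (F ω, G ω)) (a, b) = marg p F a := by
  unfold marg
  rw [Finset.sum_comm]
  refine Finset.sum_congr rfl fun ω _ => ?_
  rw [Finset.sum_eq_single (G ω)]
  · by_cases h : F ω = a <;> simp [h, Prod.ext_iff]
  · intro b _ hb
    exact if_neg fun e => hb (congrArg Prod.snd e).symm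
  · simp

lemma sum_marg_snd (p : Ω → ℝ) (F : Ω → A) (G : Ω → B) (b : B) :
    ∑ a, marg p (fun ω => (F ω, G ω)) (a, b) = marg p G b := by
  unfold marg
  rw [Finset.sum_comm]
  refine Finset.sum_congr rfl fun ω _ => ?_
  rw [Finset.sum_eq_single (F ω)]
  · by_cases h : G ω = b <;> simp [h, Prod.ext_iff]
  · intro a _ ha
    exact if_neg fun e => ha (congrArg Prod.fst e).symm
  · simp

lemma sum_marg_triple (p : Ω → ℝ) (f : Ω → A) (g : Ω → B) (h : Ω → C) (b : B) (c : C) :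
    ∑ a, marg p (fun ω => ((f ω, h ω), g ω)) ((a, c), b)
      = marg p (fun ω => (g ω, h ω)) (b, c) := by
  unfold marg
  rw [Finset.sum_comm]
  refine Finset.sum_congr rfl fun ω _ => ?_
  rw [Finset.sum_eq_single (f ω)]
  · by_cases h1 : g ω = b <;> by_cases h2 : h ω = c <;> simp [h1, h2, Prod.ext_iff]
  · intro a _ ha
    exact if_neg fun e => ha (congrArg (fun z => z.1.1) e).symm
  · simp

lemma gibbs (r q : A → ℝ) (hr0 : ∀ a, 0 ≤ r a) (hr1 : ∑ a, r a = 1)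
    (hq0 : ∀ a, 0 ≤ q a) (hq1 : ∑ a, q a ≤ 1)
    (hac : ∀ a, r a ≠ 0 → 0 < q a) :
    ∑ a, r a * Real.log (q a) ≤ ∑ a, r a * Real.log (r a) := by
  have key : ∀ a, r a * Real.log (q a) - r a * Real.log (r a) ≤ q a - r a := by
    intro a
    rcases eq_or_lt_of_le (hr0 a) with h | h
    · simp [← h, hq0 a]
    · have hq := hac a (ne_of_gt h)
      have hl := Real.log_le_sub_one_of_pos (div_pos hq h)
      rw [Real.log_div (ne_of_gt hq) (ne_of_gt h)] at hl
      have h3 := mul_le_mul_of_nonneg_left hl (le_of_lt h)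
      rw [mul_sub, mul_sub] at h3
      have h4 : r a * (q a / r a) = q a := mul_div_cancel₀ _ (ne_of_gt h)
      rw [h4, mul_one] at h3
      linarith
  have h2 : ∑ a, (r a * Real.log (q a) - r a * Real.log (r a)) ≤ ∑ a, (q a - r a) :=
    Finset.sum_le_sum fun a _ => key a
  rw [Finset.sum_sub_distrib, Finset.sum_sub_distrib, hr1] at h2
  linarith

lemma Hn_relabel (p : Ω → ℝ) (σ : A → B) (hσ : Function.Injective σ) (F : Ω → A) :
    Hn (marg p (fun ω => σ (F ω))) = Hn (marg p F) := by
  classical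
  have h1 : ∀ a, marg p (fun ω => σ (F ω)) (σ a) = marg p F a := by
    intro a
    unfold marg
    exact Finset.sum_congr rfl fun ω _ => by simp [hσ.eq_iff]
  have h2 : ∀ b, b ∉ Finset.univ.image σ → marg p (fun ω => σ (F ω)) b = 0 := by
    intro b hb
    unfold marg
    refine Finset.sum_eq_zero fun ω _ => ?_
    have hne : σ (F ω) ≠ b := fun h => hb (h ▸ Finset.mem_image_of_mem σ (Finset.mem_univ _))
    simp [hne]
  unfold Hn
  rw [← Finset.sum_subset (Finset.subset_univ (Finset.univ.image σ))
    (fun b _ hb => by rw [h2 b hb]; exact Real.negMulLog_zero)]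
  rw [Finset.sum_image (fun a _ a' _ h => hσ h)]
  exact Finset.sum_congr rfl fun a _ => by rw [h1]

lemma Hn_congr' (p : Ω → ℝ) (σ : A → B) (hσ : Function.Injective σ)
    (F : Ω → A) (G : Ω → B) (hFG : ∀ ω, G ω = σ (F ω)) :
    Hn (marg p G) = Hn (marg p F) := by
  have h : G = fun ω => σ (F ω) := funext hFG
  rw [h]
  exact Hn_relabel p σ hσ F

lemma Hn_marg_injective (p : Ω → ℝ) (F : Ω → A) (hF : Function.Injective F) :
    Hn (marg p F) = Hn p := by
  have h := Hn_congr' p F hF (fun ω => ω) F (fun ω => rfl)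
  have h2 : marg p (fun ω => ω) = p := by
    funext ω'
    unfold marg
    rw [Finset.sum_eq_single ω']
    · simp
    · intro b _ hb
      exact if_neg hb
    · simp
  rw [h, h2]

lemma marg_comp_inj (p : Ω → ℝ) (σ : A → B) (hσ : Function.Injective σ)
    (F : Ω → A) (z : A) : marg p (fun ω => σ (F ω)) (σ z) = marg p F z := by
  unfold marg
  refine Finset.sum_congr rfl fun ω _ => ?_
  by_cases h : F ω = z
  · simp [h]
  · simp [h, hσ.ne h]

lemma Hn_mul (μ : A → ℝ) (ν : B → ℝ) (hμ : ∑ a, μ a = 1) (hν : ∑ b, ν b = 1) :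
    Hn (fun x : A × B => μ x.1 * ν x.2) = Hn μ + Hn ν := by
  unfold Hn
  rw [Fintype.sum_prod_type]
  have hrow : ∀ a, ∑ b, Real.negMulLog (μ a * ν b)
      = Real.negMulLog (μ a) + μ a * ∑ b, Real.negMulLog (ν b) := by
    intro a
    simp only [Real.negMulLog_mul]
    rw [Finset.sum_add_distrib, ← Finset.sum_mul, ← Finset.mul_sum, hν, one_mul]
  rw [Finset.sum_congr rfl fun a _ => hrow a, Finset.sum_add_distrib, ← Finset.sum_mul, hμ,
    one_mul]

end EntropyToolkit

section Submod

variable {Ω A B C : Type*} [Fintype Ω] [Fintype A] [Fintype B] [Fintype C]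

lemma Hn_submod (p : Ω → ℝ) (hp0 : ∀ ω, 0 ≤ p ω) (hp1 : ∑ ω, p ω = 1)
    (f : Ω → A) (g : Ω → B) (h : Ω → C) :
    Hn (marg p fun ω => ((f ω, h ω), g ω)) + Hn (marg p h)
      ≤ Hn (marg p fun ω => (f ω, h ω)) + Hn (marg p fun ω => (g ω, h ω)) := by
  classical
  set r := marg p (fun ω => ((f ω, h ω), g ω)) with hrdef
  set rfh := marg p (fun ω => (f ω, h ω)) with hrfhdef
  set rgh := marg p (fun ω => (g ω, h ω)) with hrghdef
  set rh := marg p h with hrhdef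
  have hr0 : ∀ x, 0 ≤ r x := fun x => marg_nonneg p hp0 _ x
  have hrfh0 : ∀ x, 0 ≤ rfh x := fun x => marg_nonneg p hp0 _ x
  have hrgh0 : ∀ x, 0 ≤ rgh x := fun x => marg_nonneg p hp0 _ x
  have hrh0 : ∀ x, 0 ≤ rh x := fun x => marg_nonneg p hp0 _ x
  have dom1 : ∀ x : (A × C) × B, r x ≤ rfh x.1 := fun x =>
    marg_mono p hp0 Prod.fst (fun ω => rfl) x
  have dom2 : ∀ x : (A × C) × B, r x ≤ rgh (x.2, x.1.2) := fun x =>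
    marg_mono p hp0 (fun z => (z.2, z.1.2)) (fun ω => rfl) x
  have dom3 : ∀ x : A × C, rfh x ≤ rh x.2 := fun x =>
    marg_mono p hp0 Prod.snd (fun ω => rfl) x
  have s1 : ∀ y : A × C, ∑ b, r (y, b) = rfh y := fun y => sum_marg_fst p _ g y
  have s2 : ∀ (b : B) (c : C), ∑ a, r ((a, c), b) = rgh (b, c) := fun b c =>
    sum_marg_triple p f g h b c
  have s3 : ∀ c, ∑ b, rgh (b, c) = rh c := fun c => sum_marg_snd p g h c
  have s4 : ∀ c, ∑ a, rfh (a, c) = rh c := fun c => sum_marg_snd p f h c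
  set Q : (A × C) × B → ℝ := fun x => rfh x.1 * rgh (x.2, x.1.2) / rh x.1.2 with hQdef
  have hQ0 : ∀ x, 0 ≤ Q x := fun x =>
    div_nonneg (mul_nonneg (hrfh0 _) (hrgh0 _)) (hrh0 _)
  have hr1 : ∑ x, r x = 1 := by rw [hrdef, sum_marg, hp1]
  have hQ1 : ∑ x, Q x ≤ 1 := by
    rw [Fintype.sum_prod_type]
    have hbound : ∑ y : A × C, ∑ b, Q (y, b) ≤ ∑ y : A × C, rfh y := by
      refine Finset.sum_le_sum fun y _ => ?_
      have hrow : ∑ b, Q (y, b) = rfh y * rh y.2 / rh y.2 := by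
        have e0 : ∑ b, Q (y, b) = ∑ b, rfh y * rgh (b, y.2) / rh y.2 :=
          Finset.sum_congr rfl fun b _ => rfl
        rw [e0, ← Finset.sum_div, ← Finset.mul_sum, s3 y.2]
      rw [hrow]
      rcases eq_or_ne (rh y.2) 0 with h0 | h0
      · rw [h0, div_zero]
        exact hrfh0 y
      · rw [mul_div_assoc, div_self h0, mul_one]
    have htot : ∑ y : A × C, rfh y = 1 := by rw [hrfhdef, sum_marg, hp1]
    linarith
  have hac : ∀ x, r x ≠ 0 → 0 < Q x := by
    intro x hx
    have hrx : 0 < r x := (hr0 x).lt_of_ne (Ne.symm hx)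
    have h1 : 0 < rfh x.1 := lt_of_lt_of_le hrx (dom1 x)
    have h2 : 0 < rgh (x.2, x.1.2) := lt_of_lt_of_le hrx (dom2 x)
    have h3 : 0 < rh x.1.2 := lt_of_lt_of_le h1 (dom3 x.1)
    exact div_pos (mul_pos h1 h2) h3
  have hlog : ∀ x : (A × C) × B, r x * Real.log (Q x)
      = r x * Real.log (rfh x.1) + r x * Real.log (rgh (x.2, x.1.2))
        - r x * Real.log (rh x.1.2) := by
    intro x
    rcases eq_or_ne (r x) 0 with h0 | h0
    · simp [h0]
    · have hrx : 0 < r x := (hr0 x).lt_of_ne (Ne.symm h0)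
      have h1 : 0 < rfh x.1 := lt_of_lt_of_le hrx (dom1 x)
      have h2 : 0 < rgh (x.2, x.1.2) := lt_of_lt_of_le hrx (dom2 x)
      have h3 : 0 < rh x.1.2 := lt_of_lt_of_le h1 (dom3 x.1)
      have : Q x = rfh x.1 * rgh (x.2, x.1.2) / rh x.1.2 := rfl
      rw [this, Real.log_div (mul_ne_zero (ne_of_gt h1) (ne_of_gt h2)) (ne_of_gt h3),
        Real.log_mul (ne_of_gt h1) (ne_of_gt h2)]
      ring
  have T1 : ∑ x : (A × C) × B, r x * Real.log (rfh x.1)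
      = ∑ y : A × C, rfh y * Real.log (rfh y) := by
    rw [Fintype.sum_prod_type]
    refine Finset.sum_congr rfl fun y _ => ?_
    have e0 : ∑ b, r (y, b) * Real.log (rfh (y, b).1)
        = ∑ b, r (y, b) * Real.log (rfh y) := Finset.sum_congr rfl fun b _ => rfl
    rw [e0, ← Finset.sum_mul, s1 y]
  have T2 : ∑ x : (A × C) × B, r x * Real.log (rgh (x.2, x.1.2))
      = ∑ z : B × C, rgh z * Real.log (rgh z) := by
    have step1 : ∑ x : (A × C) × B, r x * Real.log (rgh (x.2, x.1.2))
        = ∑ a : A, ∑ c : C, ∑ b : B, r ((a, c), b) * Real.log (rgh (b, c)) := by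
      rw [Fintype.sum_prod_type, Fintype.sum_prod_type]
    have step2 : ∑ z : B × C, rgh z * Real.log (rgh z)
        = ∑ c : C, ∑ b : B, rgh (b, c) * Real.log (rgh (b, c)) := by
      rw [Fintype.sum_prod_type]
      exact Finset.sum_comm
    rw [step1, step2, Finset.sum_comm]
    refine Finset.sum_congr rfl fun c _ => ?_
    rw [Finset.sum_comm]
    refine Finset.sum_congr rfl fun b _ => ?_
    rw [← Finset.sum_mul, s2 b c]
  have T3 : ∑ x : (A × C) × B, r x * Real.log (rh x.1.2)
      = ∑ c, rh c * Real.log (rh c) := by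
    have step1 : ∑ x : (A × C) × B, r x * Real.log (rh x.1.2)
        = ∑ a : A, ∑ c : C, ∑ b : B, r ((a, c), b) * Real.log (rh c) := by
      rw [Fintype.sum_prod_type, Fintype.sum_prod_type]
    rw [step1, Finset.sum_comm]
    refine Finset.sum_congr rfl fun c _ => ?_
    have e1 : ∑ a, ∑ b, r ((a, c), b) * Real.log (rh c)
        = (∑ a, ∑ b, r ((a, c), b)) * Real.log (rh c) := by
      rw [Finset.sum_mul]
      exact Finset.sum_congr rfl fun a _ => (Finset.sum_mul _ _ _).symm
    rw [e1]
    congr 1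
    rw [Finset.sum_congr rfl fun a _ => s1 (a, c), s4 c]
  have hg := gibbs r Q hr0 hr1 hQ0 hQ1 hac
  rw [Finset.sum_congr rfl fun x _ => hlog x, Finset.sum_sub_distrib,
    Finset.sum_add_distrib, T1, T2, T3] at hg
  rw [Hn_eq, Hn_eq, Hn_eq, Hn_eq]
  linarith

lemma Hn_subadd (p : Ω → ℝ) (hp0 : ∀ ω, 0 ≤ p ω) (hp1 : ∑ ω, p ω = 1)
    (f : Ω → A) (g : Ω → B) :
    Hn (marg p fun ω => (f ω, g ω)) ≤ Hn (marg p f) + Hn (marg p g) := by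
  have H := Hn_submod p hp0 hp1 f g (fun _ => ())
  have e1 : Hn (marg p fun ω => ((f ω, ()), g ω)) = Hn (marg p fun ω => (f ω, g ω)) := by
    refine Hn_congr' p (fun z : A × B => ((z.1, ()), z.2)) ?_ _ _ (fun ω => rfl)
    intro z z' hz
    have h1 := congrArg (fun w => w.1.1) hz
    have h2 := congrArg Prod.snd hz
    exact Prod.ext h1 h2
  have e2 : Hn (marg p fun ω => (f ω, ())) = Hn (marg p f) := by
    refine Hn_congr' p (fun a : A => (a, ())) ?_ _ _ (fun ω => rfl)
    intro a a' ha
    exact congrArg Prod.fst ha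
  have e3 : Hn (marg p (fun _ : Ω => ())) = 0 := by
    have hval : marg p (fun _ : Ω => ()) () = 1 := by
      unfold marg
      simp [hp1]
    unfold Hn
    rw [Fintype.sum_unique]
    rw [hval, Real.negMulLog_one]
  have e4 : Hn (marg p fun ω => (g ω, ())) = Hn (marg p g) := by
    refine Hn_congr' p (fun a : B => (a, ())) ?_ _ _ (fun ω => rfl)
    intro a a' ha
    exact congrArg Prod.fst ha
  rw [e1, e2, e3, e4] at H
  linarith

end Submod

open scoped Classical in
/-- Indicator helper, instance-free. -/
noncomputable def ind (c : Prop) (v : ℝ) : ℝ := if c then v else 0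

lemma ind_pos {c : Prop} (h : c) (v : ℝ) : ind c v = v := if_pos h

lemma ind_neg {c : Prop} (h : ¬c) (v : ℝ) : ind c v = 0 := if_neg h

lemma marg_eq_sum_ind {Ω A : Type*} [Fintype Ω] (p : Ω → ℝ) (f : Ω → A) (a : A) :
    marg p f a = ∑ ω, ind (f ω = a) (p ω) := rfl

lemma sum_ind_eq {A : Type*} [Fintype A] (x : A) (v : A → ℝ) :
    ∑ a, ind (a = x) (v a) = v x := by
  rw [Finset.sum_eq_single x]
  · exact ind_pos rfl _
  · intro b _ hb
    exact ind_neg hb _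
  · intro hx
    exact absurd (Finset.mem_univ x) hx

section MAC

variable {m : ℕ} {𝒳 : Fin m → Type*} [∀ i, Fintype (𝒳 i)] {Y : Type*} [Fintype Y]

lemma sum_prod_pi {ι : Type*} [Fintype ι] [DecidableEq ι] {κ : ι → Type*} [∀ i, Fintype (κ i)]
    (f : ∀ i, κ i → ℝ) (hf : ∀ i, ∑ x, f i x = 1) :
    ∑ v : ∀ i, κ i, ∏ i, f i (v i) = 1 := by
  rw [← Fintype.prod_sum f]
  exact Finset.prod_eq_one fun i _ => hf i

lemma macJoint_nonneg (p : ∀ i, 𝒳 i → ℝ) (hp : ∀ i, (∀ x, 0 ≤ p i x) ∧ ∑ x, p i x = 1)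
    (W : (∀ i, 𝒳 i) → Y → ℝ) (hW : IsChannel W) (q : (∀ i, 𝒳 i) × Y) :
    0 ≤ macJoint p W q :=
  mul_nonneg (Finset.prod_nonneg fun i _ => (hp i).1 _) (hW.1 _ _)

lemma macJoint_total (p : ∀ i, 𝒳 i → ℝ) (hp : ∀ i, (∀ x, 0 ≤ p i x) ∧ ∑ x, p i x = 1)
    (W : (∀ i, 𝒳 i) → Y → ℝ) (hW : IsChannel W) :
    ∑ q, macJoint p W q = 1 := by
  rw [Fintype.sum_prod_type]
  have h1 : ∀ v : ∀ i, 𝒳 i, ∑ y, macJoint p W (v, y) = ∏ i, p i (v i) := by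
    intro v
    show ∑ y, (∏ i, p i (v i)) * W v y = ∏ i, p i (v i)
    rw [← Finset.mul_sum, hW.2 v, mul_one]
  rw [Finset.sum_congr rfl fun v _ => h1 v]
  exact sum_prod_pi _ fun i => (hp i).2

lemma marg_restrict (p : ∀ i, 𝒳 i → ℝ) (hp : ∀ i, (∀ x, 0 ≤ p i x) ∧ ∑ x, p i x = 1)
    (W : (∀ i, 𝒳 i) → Y → ℝ) (hW : IsChannel W) (S : Finset (Fin m))
    (x : ∀ i : {i // i ∈ S}, 𝒳 i.1) :
    marg (macJoint p W) (fun q => fun i : {i // i ∈ S} => q.1 i.1) x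
      = ∏ i : {i // i ∈ S}, p i.1 (x i) := by
  have e := Equiv.piEquivPiSubtypeProd (fun i : Fin m => i ∈ S) 𝒳
  have h0 : (∑ q : (∀ i, 𝒳 i) × Y,
        ind ((fun i : {i // i ∈ S} => q.1 i.1) = x) (macJoint p W q))
      = ∑ v : ∀ i, 𝒳 i, ind ((fun i : {i // i ∈ S} => v i.1) = x) (∏ i, p i (v i)) := by
    rw [Fintype.sum_prod_type]
    refine Finset.sum_congr rfl fun v _ => ?_
    show (∑ y, ind ((fun i : {i // i ∈ S} => v i.1) = x) ((∏ i, p i (v i)) * W v y))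
        = ind ((fun i : {i // i ∈ S} => v i.1) = x) (∏ i, p i (v i))
    by_cases hc : (fun i : {i // i ∈ S} => v i.1) = x
    · simp only [ind_pos hc]
      rw [← Finset.mul_sum, hW.2 v, mul_one]
    · simp only [ind_neg hc]
      exact Finset.sum_const_zero
  have h1 : (∑ v : ∀ i, 𝒳 i, ind ((fun i : {i // i ∈ S} => v i.1) = x) (∏ i, p i (v i)))
      = ∑ z : (∀ i : {i // i ∈ S}, 𝒳 i.1) × (∀ i : {i // ¬i ∈ S}, 𝒳 i.1),
          ind (z.1 = x) ((∏ i : {i // i ∈ S}, p i.1 (z.1 i))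
            * ∏ i : {i // ¬i ∈ S}, p i.1 (z.2 i)) := by
    rw [← Equiv.sum_comp
      (Equiv.piEquivPiSubtypeProd (fun i : Fin m => i ∈ S) 𝒳).symm
      (fun v => ind ((fun i : {i // i ∈ S} => v i.1) = x) (∏ i, p i (v i)))]
    refine Finset.sum_congr rfl fun z _ => ?_
    set w := (Equiv.piEquivPiSubtypeProd (fun i : Fin m => i ∈ S) 𝒳).symm z with hw
    have hres : (fun i : {i // i ∈ S} => w i.1) = z.1 := by
      funext i
      simp only [hw, Equiv.piEquivPiSubtypeProd_symm_apply, i.2, dif_pos]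
    have hprod : ∏ i, p i (w i)
        = (∏ i : {i // i ∈ S}, p i.1 (z.1 i)) * ∏ i : {i // ¬i ∈ S}, p i.1 (z.2 i) := by
      rw [← Fintype.prod_subtype_mul_prod_subtype (fun i => i ∈ S) (fun i => p i (w i))]
      congr 1
      · refine Finset.prod_congr ?_ fun i _ => ?_
        · exact congrArg (fun (h : Fintype {x // x ∈ S}) => @Finset.univ _ h)
            (Subsingleton.elim _ _)
        · simp only [hw, Equiv.piEquivPiSubtypeProd_symm_apply, i.2, dif_pos]
      · refine Finset.prod_congr ?_ fun i _ => ?_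
        · exact congrArg (fun (h : Fintype {x // ¬x ∈ S}) => @Finset.univ _ h)
            (Subsingleton.elim _ _)
        · simp only [hw, Equiv.piEquivPiSubtypeProd_symm_apply, i.2, dif_neg, not_false_iff]
    rw [hres, hprod]
  have h2 : (∑ z : (∀ i : {i // i ∈ S}, 𝒳 i.1) × (∀ i : {i // ¬i ∈ S}, 𝒳 i.1),
        ind (z.1 = x) ((∏ i : {i // i ∈ S}, p i.1 (z.1 i))
          * ∏ i : {i // ¬i ∈ S}, p i.1 (z.2 i)))
      = ∑ z1 : ∀ i : {i // i ∈ S}, 𝒳 i.1,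
          ind (z1 = x) (∏ i : {i // i ∈ S}, p i.1 (z1 i)) := by
    rw [Fintype.sum_prod_type]
    refine Finset.sum_congr rfl fun z1 _ => ?_
    show (∑ z2 : ∀ i : {i // ¬i ∈ S}, 𝒳 i.1,
        ind (z1 = x) ((∏ i : {i // i ∈ S}, p i.1 (z1 i))
          * ∏ i : {i // ¬i ∈ S}, p i.1 (z2 i)))
      = ind (z1 = x) (∏ i : {i // i ∈ S}, p i.1 (z1 i))
    by_cases hc : z1 = x
    · simp only [ind_pos hc]
      rw [← Finset.mul_sum,
        sum_prod_pi (fun i : {i // ¬i ∈ S} => p i.1) (fun i => (hp i.1).2), mul_one]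
    · simp only [ind_neg hc]
      exact Finset.sum_const_zero
  have h3 : (∑ z1 : ∀ i : {i // i ∈ S}, 𝒳 i.1,
        ind (z1 = x) (∏ i : {i // i ∈ S}, p i.1 (z1 i)))
      = ∏ i : {i // i ∈ S}, p i.1 (x i) :=
    sum_ind_eq x (fun z1 => ∏ i : {i // i ∈ S}, p i.1 (z1 i))
  exact (marg_eq_sum_ind _ _ _).trans (h0.trans (h1.trans (h2.trans h3)))

end MAC

section MAC2

variable {m : ℕ} {𝒳 : Fin m → Type*} [∀ i, Fintype (𝒳 i)] {Y : Type*} [Fintype Y]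

lemma prod_univ_inst {α M : Type*} [CommMonoid M] {inst1 inst2 : Fintype α} {f g : α → M}
    (hfg : ∀ a, f a = g a) :
    @Finset.prod α M _ (@Finset.univ α inst1) f = @Finset.prod α M _ (@Finset.univ α inst2) g := by
  obtain rfl : inst1 = inst2 := Subsingleton.elim _ _
  exact Finset.prod_congr rfl fun a _ => hfg a

lemma marg_restrict_pair (p : ∀ i, 𝒳 i → ℝ) (hp : ∀ i, (∀ x, 0 ≤ p i x) ∧ ∑ x, p i x = 1)
    (W : (∀ i, 𝒳 i) → Y → ℝ) (hW : IsChannel W) (A B : Finset (Fin m)) (hAB : Disjoint A B)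
    (x : ∀ i : {i // i ∈ A}, 𝒳 i.1) (y : ∀ i : {i // i ∈ B}, 𝒳 i.1) :
    marg (macJoint p W)
      (fun q => ((fun i : {i // i ∈ A} => q.1 i.1), fun i : {i // i ∈ B} => q.1 i.1)) (x, y)
      = (∏ i : {i // i ∈ A}, p i.1 (x i)) * ∏ i : {i // i ∈ B}, p i.1 (y i) := by
  let σ : (∀ i : {i // i ∈ A ∪ B}, 𝒳 i.1) →
      (∀ i : {i // i ∈ A}, 𝒳 i.1) × (∀ i : {i // i ∈ B}, 𝒳 i.1) :=
    fun w => (fun i => w ⟨i.1, Finset.mem_union_left _ i.2⟩,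
              fun i => w ⟨i.1, Finset.mem_union_right _ i.2⟩)
  have hσ : Function.Injective σ := by
    intro w w' hw
    funext i
    rcases Finset.mem_union.1 i.2 with h | h
    · exact congrFun (congrArg Prod.fst hw) ⟨i.1, h⟩
    · exact congrFun (congrArg Prod.snd hw) ⟨i.1, h⟩
  let z : ∀ i : {i // i ∈ A ∪ B}, 𝒳 i.1 := fun i =>
    if h : i.1 ∈ A then x ⟨i.1, h⟩ else y ⟨i.1, (Finset.mem_union.1 i.2).resolve_left h⟩
  have hσz : σ z = (x, y) := by
    refine Prod.ext ?_ ?_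
    · funext i
      exact dif_pos i.2
    · funext i
      have hiA : i.1 ∉ A := fun hA => (Finset.disjoint_left.1 hAB hA) i.2
      exact dif_neg hiA
  have h1 : marg (macJoint p W)
      (fun q => ((fun i : {i // i ∈ A} => q.1 i.1), fun i : {i // i ∈ B} => q.1 i.1)) (x, y)
      = marg (macJoint p W) (fun q => fun i : {i // i ∈ A ∪ B} => q.1 i.1) z := by
    rw [← hσz]
    exact marg_comp_inj (macJoint p W) σ hσ
      (fun q => fun i : {i // i ∈ A ∪ B} => q.1 i.1) z
  rw [h1, marg_restrict p hp W hW (A ∪ B) z]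
  let g : Fin m → ℝ := fun j => if h : j ∈ A ∪ B then p j (z ⟨j, h⟩) else 1
  have stepA : ∏ i : {i // i ∈ A ∪ B}, p i.1 (z i) = ∏ i ∈ A ∪ B, g i :=
    (prod_univ_inst fun i => (dif_pos i.2).symm).trans (Finset.prod_coe_sort (A ∪ B) g)
  have stepC : ∏ i ∈ A, g i = ∏ i : {i // i ∈ A}, p i.1 (x i) := by
    refine (Finset.prod_coe_sort A g).symm.trans (prod_univ_inst fun i => ?_)
    have hm : i.1 ∈ A ∪ B := Finset.mem_union_left _ i.2
    have h2 : z ⟨i.1, hm⟩ = x i := dif_pos i.2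
    exact (dif_pos hm).trans (congrArg (p i.1) h2)
  have stepD : ∏ i ∈ B, g i = ∏ i : {i // i ∈ B}, p i.1 (y i) := by
    refine (Finset.prod_coe_sort B g).symm.trans (prod_univ_inst fun i => ?_)
    have hm : i.1 ∈ A ∪ B := Finset.mem_union_right _ i.2
    have hiA : i.1 ∉ A := fun hA => (Finset.disjoint_left.1 hAB hA) i.2
    have h2 : z ⟨i.1, hm⟩ = y i := dif_neg hiA
    exact (dif_pos hm).trans (congrArg (p i.1) h2)
  rw [stepA, Finset.prod_union hAB, stepC, stepD]

lemma Hn_union (p : ∀ i, 𝒳 i → ℝ) (hp : ∀ i, (∀ x, 0 ≤ p i x) ∧ ∑ x, p i x = 1)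
    (W : (∀ i, 𝒳 i) → Y → ℝ) (hW : IsChannel W) (A B : Finset (Fin m)) (hAB : Disjoint A B) :
    Hn (marg (macJoint p W) (fun q => fun i : {i // i ∈ A ∪ B} => q.1 i.1))
      = Hn (marg (macJoint p W) (fun q => fun i : {i // i ∈ A} => q.1 i.1))
        + Hn (marg (macJoint p W) (fun q => fun i : {i // i ∈ B} => q.1 i.1)) := by
  have hσ : Function.Injective (fun w : ∀ i : {i // i ∈ A ∪ B}, 𝒳 i.1 =>
      ((fun i : {i // i ∈ A} => w ⟨i.1, Finset.mem_union_left _ i.2⟩),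
       (fun i : {i // i ∈ B} => w ⟨i.1, Finset.mem_union_right _ i.2⟩))) := by
    intro w w' hw
    funext i
    rcases Finset.mem_union.1 i.2 with h | h
    · exact congrFun (congrArg Prod.fst hw) ⟨i.1, h⟩
    · exact congrFun (congrArg Prod.snd hw) ⟨i.1, h⟩
  have e1 : Hn (marg (macJoint p W)
      (fun q => ((fun i : {i // i ∈ A} => q.1 i.1), fun i : {i // i ∈ B} => q.1 i.1)))
      = Hn (marg (macJoint p W) (fun q => fun i : {i // i ∈ A ∪ B} => q.1 i.1)) :=
    Hn_congr' (macJoint p W) _ hσ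
      (fun q => fun i : {i // i ∈ A ∪ B} => q.1 i.1) _ (fun q => rfl)
  rw [← e1]
  have e2 : marg (macJoint p W)
      (fun q => ((fun i : {i // i ∈ A} => q.1 i.1), fun i : {i // i ∈ B} => q.1 i.1))
      = fun z => marg (macJoint p W) (fun q => fun i : {i // i ∈ A} => q.1 i.1) z.1
          * marg (macJoint p W) (fun q => fun i : {i // i ∈ B} => q.1 i.1) z.2 := by
    funext z
    obtain ⟨zx, zy⟩ := z
    rw [marg_restrict_pair p hp W hW A B hAB zx zy, marg_restrict p hp W hW A zx,
      marg_restrict p hp W hW B zy]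
  rw [e2]
  exact Hn_mul _ _ (by rw [sum_marg, macJoint_total p hp W hW])
    (by rw [sum_marg, macJoint_total p hp W hW])

end MAC2

section Final

variable {m : ℕ} {𝒳 : Fin m → Type*} [∀ i, Fintype (𝒳 i)] {Y : Type*} [Fintype Y]

lemma macRho_eq (p : ∀ i, 𝒳 i → ℝ) (hp : ∀ i, (∀ x, 0 ≤ p i x) ∧ ∑ x, p i x = 1)
    (W : (∀ i, 𝒳 i) → Y → ℝ) (hW : IsChannel W) (S : Finset (Fin m)) :
    macRho p W S =
      (Hn (marg (macJoint p W) (fun q => fun i : {i // i ∈ S} => q.1 i.1))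
        + Hn (marg (macJoint p W) (fun q => (q.2, fun i : {i // i ∈ Sᶜ} => q.1 i.1)))
        - Hn (macJoint p W)) / Real.log 2 := by
  have hinj : Hn (marg (macJoint p W) (fun q : (∀ i, 𝒳 i) × Y =>
      ((fun i : {i // i ∈ S} => q.1 i.1), (q.2, fun i : {i // i ∈ Sᶜ} => q.1 i.1))))
      = Hn (macJoint p W) := by
    refine Hn_marg_injective _ _ ?_
    intro q q' hq
    have h1 := congrArg Prod.fst hq
    have h2 := congrArg (fun w : (∀ i : {i // i ∈ S}, 𝒳 i.1) ×
      (Y × (∀ i : {i // i ∈ Sᶜ}, 𝒳 i.1)) => w.2.1) hq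
    have h3 := congrArg (fun w : (∀ i : {i // i ∈ S}, 𝒳 i.1) ×
      (Y × (∀ i : {i // i ∈ Sᶜ}, 𝒳 i.1)) => w.2.2) hq
    refine Prod.ext ?_ h2
    funext i
    by_cases hi : i ∈ S
    · exact congrFun h1 ⟨i, hi⟩
    · exact congrFun h3 ⟨i, Finset.mem_compl.2 hi⟩
  simp only [macRho, mi]
  rw [H2_eq, H2_eq, H2_eq, hinj]
  ring

end Final

theorem statement5 {m : ℕ} {𝒳 : Fin m → Type*} [∀ i, Fintype (𝒳 i)] {Y : Type*}
    [Fintype Y] (p : ∀ i, 𝒳 i → ℝ)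
    (hp : ∀ i, (∀ x, 0 ≤ p i x) ∧ ∑ x, p i x = 1)
    (W : (∀ i, 𝒳 i) → Y → ℝ) (hW : IsChannel W) :
    macRho p W ∅ = 0 ∧
    (∀ J K : Finset (Fin m), J ⊆ K → macRho p W J ≤ macRho p W K) ∧
    (∀ J K : Finset (Fin m),
      macRho p W (J ∪ K) + macRho p W (J ∩ K) ≤ macRho p W J + macRho p W K) := by
  have hP0 : ∀ q, 0 ≤ macJoint p W q := macJoint_nonneg p hp W hW
  have hP1 : ∑ q, macJoint p W q = 1 := macJoint_total p hp W hW
  have hl2 : (0:ℝ) < Real.log 2 := Real.log_pos (by norm_num)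
  refine ⟨?_, ?_, ?_⟩
  · -- ρ(∅) = 0
    rw [macRho_eq p hp W hW ∅]
    have hf0 : Hn (marg (macJoint p W)
        (fun q => fun i : {i // i ∈ (∅ : Finset (Fin m))} => q.1 i.1)) = 0 := by
      have hval : ∀ x, marg (macJoint p W)
          (fun q => fun i : {i // i ∈ (∅ : Finset (Fin m))} => q.1 i.1) x = 1 := by
        intro x
        rw [marg_eq_sum_ind]
        have hc : ∀ ω : (∀ i, 𝒳 i) × Y,
            (fun i : {i // i ∈ (∅ : Finset (Fin m))} => ω.1 i.1) = x :=
          fun ω => funext fun i => absurd i.2 (Finset.notMem_empty i.1)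
        rw [Finset.sum_congr rfl fun ω _ => ind_pos (hc ω) _, hP1]
      unfold Hn
      rw [Finset.sum_congr rfl fun x _ => by rw [hval x]]
      simp [Real.negMulLog_one]
    have hg0 : Hn (marg (macJoint p W)
        (fun q => (q.2, fun i : {i // i ∈ (∅ : Finset (Fin m))ᶜ} => q.1 i.1)))
        = Hn (macJoint p W) := by
      refine Hn_marg_injective _ _ ?_
      intro q q' hq
      have h2 := congrArg Prod.fst hq
      have h3 := congrArg Prod.snd hq
      refine Prod.ext ?_ h2
      funext i
      exact congrFun h3 ⟨i, Finset.mem_compl.2 (Finset.notMem_empty i)⟩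
    rw [hf0, hg0]
    ring
  · -- monotone
    intro J K hJK
    rw [macRho_eq p hp W hW J, macRho_eq p hp W hW K,
      div_le_div_iff_of_pos_right hl2]
    -- f-part
    have hfK : Hn (marg (macJoint p W) (fun q => fun i : {i // i ∈ K} => q.1 i.1))
        = Hn (marg (macJoint p W) (fun q => fun i : {i // i ∈ J} => q.1 i.1))
          + Hn (marg (macJoint p W) (fun q => fun i : {i // i ∈ K \ J} => q.1 i.1)) := by
      have h := Hn_union p hp W hW J (K \ J) Finset.disjoint_sdiff
      rw [Finset.union_sdiff_of_subset hJK] at h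
      exact h
    -- g-part
    have eg : Hn (marg (macJoint p W) (fun q =>
        ((q.2, fun i : {i // i ∈ Kᶜ} => q.1 i.1), fun i : {i // i ∈ K \ J} => q.1 i.1)))
        = Hn (marg (macJoint p W) (fun q => (q.2, fun i : {i // i ∈ Jᶜ} => q.1 i.1))) := by
      refine Hn_congr' (macJoint p W)
        (fun z : Y × (∀ i : {i // i ∈ Jᶜ}, 𝒳 i.1) =>
          ((z.1, fun i : {i // i ∈ Kᶜ} => z.2 ⟨i.1,
              Finset.mem_compl.2 fun hJ => Finset.mem_compl.1 i.2 (hJK hJ)⟩),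
           fun i : {i // i ∈ K \ J} => z.2 ⟨i.1,
              Finset.mem_compl.2 (Finset.mem_sdiff.1 i.2).2⟩)) ?_ _ _ (fun q => rfl)
      intro z z' hz
      refine Prod.ext (congrArg (fun w : (Y × (∀ i : {i // i ∈ Kᶜ}, 𝒳 i.1)) ×
        (∀ i : {i // i ∈ K \ J}, 𝒳 i.1) => w.1.1) hz) ?_
      funext i
      have hiJ : i.1 ∉ J := Finset.mem_compl.1 i.2
      by_cases hiK : i.1 ∈ K
      · exact congrFun (congrArg Prod.snd hz) ⟨i.1, Finset.mem_sdiff.2 ⟨hiK, hiJ⟩⟩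
      · exact congrFun (congrArg (fun w : (Y × (∀ i : {i // i ∈ Kᶜ}, 𝒳 i.1)) ×
          (∀ i : {i // i ∈ K \ J}, 𝒳 i.1) => w.1.2) hz) ⟨i.1, Finset.mem_compl.2 hiK⟩
    have hsub := Hn_subadd (macJoint p W) hP0 hP1
      (fun q => (q.2, fun i : {i // i ∈ Kᶜ} => q.1 i.1))
      (fun q => fun i : {i // i ∈ K \ J} => q.1 i.1)
    rw [eg] at hsub
    linarith
  · -- submodular
    intro J K
    rw [macRho_eq p hp W hW J, macRho_eq p hp W hW K, macRho_eq p hp W hW (J ∪ K),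
      macRho_eq p hp W hW (J ∩ K), ← add_div, ← add_div,
      div_le_div_iff_of_pos_right hl2]
    -- f-part identities
    have hfJ : Hn (marg (macJoint p W) (fun q => fun i : {i // i ∈ J} => q.1 i.1))
        = Hn (marg (macJoint p W) (fun q => fun i : {i // i ∈ J ∩ K} => q.1 i.1))
          + Hn (marg (macJoint p W) (fun q => fun i : {i // i ∈ J \ K} => q.1 i.1)) := by
      have hd : Disjoint (J ∩ K) (J \ K) :=
        Finset.disjoint_left.2 fun {x} hx h2 => (Finset.mem_sdiff.1 h2).2 (Finset.mem_inter.1 hx).2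
      have h := Hn_union p hp W hW (J ∩ K) (J \ K) hd
      have he : J ∩ K ∪ J \ K = J := by
        ext i
        simp only [Finset.mem_union, Finset.mem_inter, Finset.mem_sdiff]
        tauto
      rw [he] at h
      exact h
    have hfK : Hn (marg (macJoint p W) (fun q => fun i : {i // i ∈ K} => q.1 i.1))
        = Hn (marg (macJoint p W) (fun q => fun i : {i // i ∈ J ∩ K} => q.1 i.1))
          + Hn (marg (macJoint p W) (fun q => fun i : {i // i ∈ K \ J} => q.1 i.1)) := by
      have hd : Disjoint (J ∩ K) (K \ J) :=
        Finset.disjoint_left.2 fun {x} hx h2 => (Finset.mem_sdiff.1 h2).2 (Finset.mem_inter.1 hx).1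
      have h := Hn_union p hp W hW (J ∩ K) (K \ J) hd
      have he : J ∩ K ∪ K \ J = K := by
        ext i
        simp only [Finset.mem_union, Finset.mem_inter, Finset.mem_sdiff]
        tauto
      rw [he] at h
      exact h
    have hfU : Hn (marg (macJoint p W) (fun q => fun i : {i // i ∈ J ∪ K} => q.1 i.1))
        = Hn (marg (macJoint p W) (fun q => fun i : {i // i ∈ J} => q.1 i.1))
          + Hn (marg (macJoint p W) (fun q => fun i : {i // i ∈ K \ J} => q.1 i.1)) := by
      have h := Hn_union p hp W hW J (K \ J) Finset.disjoint_sdiff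
      rw [Finset.union_sdiff_self_eq_union] at h
      exact h
    -- g-part : entropy submodularity + relabelings
    have H := Hn_submod (macJoint p W) hP0 hP1
      (fun q => fun i : {i // i ∈ J \ K} => q.1 i.1)
      (fun q => fun i : {i // i ∈ K \ J} => q.1 i.1)
      (fun q => (q.2, fun i : {i // i ∈ (J ∪ K)ᶜ} => q.1 i.1))
    have eK : Hn (marg (macJoint p W) (fun q =>
        ((fun i : {i // i ∈ J \ K} => q.1 i.1),
         (q.2, fun i : {i // i ∈ (J ∪ K)ᶜ} => q.1 i.1))))
        = Hn (marg (macJoint p W) (fun q => (q.2, fun i : {i // i ∈ Kᶜ} => q.1 i.1))) := by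
      refine Hn_congr' (macJoint p W)
        (fun z : Y × (∀ i : {i // i ∈ Kᶜ}, 𝒳 i.1) =>
          ((fun i : {i // i ∈ J \ K} => z.2 ⟨i.1,
              Finset.mem_compl.2 (Finset.mem_sdiff.1 i.2).2⟩),
           (z.1, fun i : {i // i ∈ (J ∪ K)ᶜ} => z.2 ⟨i.1,
              Finset.mem_compl.2 fun hK =>
                Finset.mem_compl.1 i.2 (Finset.mem_union_right _ hK)⟩))) ?_ _ _ (fun q => rfl)
      intro z z' hz
      refine Prod.ext (congrArg (fun w : (∀ i : {i // i ∈ J \ K}, 𝒳 i.1) ×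
        (Y × (∀ i : {i // i ∈ (J ∪ K)ᶜ}, 𝒳 i.1)) => w.2.1) hz) ?_
      funext i
      have hiK : i.1 ∉ K := Finset.mem_compl.1 i.2
      by_cases hiJ : i.1 ∈ J
      · exact congrFun (congrArg Prod.fst hz) ⟨i.1, Finset.mem_sdiff.2 ⟨hiJ, hiK⟩⟩
      · exact congrFun (congrArg (fun w : (∀ i : {i // i ∈ J \ K}, 𝒳 i.1) ×
          (Y × (∀ i : {i // i ∈ (J ∪ K)ᶜ}, 𝒳 i.1)) => w.2.2) hz)
          ⟨i.1, Finset.mem_compl.2 fun hm => (Finset.mem_union.1 hm).elim hiJ hiK⟩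
    have eJ : Hn (marg (macJoint p W) (fun q =>
        ((fun i : {i // i ∈ K \ J} => q.1 i.1),
         (q.2, fun i : {i // i ∈ (J ∪ K)ᶜ} => q.1 i.1))))
        = Hn (marg (macJoint p W) (fun q => (q.2, fun i : {i // i ∈ Jᶜ} => q.1 i.1))) := by
      refine Hn_congr' (macJoint p W)
        (fun z : Y × (∀ i : {i // i ∈ Jᶜ}, 𝒳 i.1) =>
          ((fun i : {i // i ∈ K \ J} => z.2 ⟨i.1,
              Finset.mem_compl.2 (Finset.mem_sdiff.1 i.2).2⟩),
           (z.1, fun i : {i // i ∈ (J ∪ K)ᶜ} => z.2 ⟨i.1,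
              Finset.mem_compl.2 fun hJ =>
                Finset.mem_compl.1 i.2 (Finset.mem_union_left _ hJ)⟩))) ?_ _ _ (fun q => rfl)
      intro z z' hz
      refine Prod.ext (congrArg (fun w : (∀ i : {i // i ∈ K \ J}, 𝒳 i.1) ×
        (Y × (∀ i : {i // i ∈ (J ∪ K)ᶜ}, 𝒳 i.1)) => w.2.1) hz) ?_
      funext i
      have hiJ : i.1 ∉ J := Finset.mem_compl.1 i.2
      by_cases hiK : i.1 ∈ K
      · exact congrFun (congrArg Prod.fst hz) ⟨i.1, Finset.mem_sdiff.2 ⟨hiK, hiJ⟩⟩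
      · exact congrFun (congrArg (fun w : (∀ i : {i // i ∈ K \ J}, 𝒳 i.1) ×
          (Y × (∀ i : {i // i ∈ (J ∪ K)ᶜ}, 𝒳 i.1)) => w.2.2) hz)
          ⟨i.1, Finset.mem_compl.2 fun hm => (Finset.mem_union.1 hm).elim hiJ hiK⟩
    have eI : Hn (marg (macJoint p W) (fun q =>
        (((fun i : {i // i ∈ J \ K} => q.1 i.1),
          (q.2, fun i : {i // i ∈ (J ∪ K)ᶜ} => q.1 i.1)),
         fun i : {i // i ∈ K \ J} => q.1 i.1)))
        = Hn (marg (macJoint p W)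
            (fun q => (q.2, fun i : {i // i ∈ (J ∩ K)ᶜ} => q.1 i.1))) := by
      refine Hn_congr' (macJoint p W)
        (fun z : Y × (∀ i : {i // i ∈ (J ∩ K)ᶜ}, 𝒳 i.1) =>
          (((fun i : {i // i ∈ J \ K} => z.2 ⟨i.1,
              Finset.mem_compl.2 fun hm =>
                (Finset.mem_sdiff.1 i.2).2 (Finset.mem_inter.1 hm).2⟩),
            (z.1, fun i : {i // i ∈ (J ∪ K)ᶜ} => z.2 ⟨i.1,
              Finset.mem_compl.2 fun hm =>
                Finset.mem_compl.1 i.2 (Finset.mem_union_left _ (Finset.mem_inter.1 hm).1)⟩)),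
           fun i : {i // i ∈ K \ J} => z.2 ⟨i.1,
              Finset.mem_compl.2 fun hm =>
                (Finset.mem_sdiff.1 i.2).2 (Finset.mem_inter.1 hm).1⟩)) ?_ _ _ (fun q => rfl)
      intro z z' hz
      refine Prod.ext (congrArg (fun w : ((∀ i : {i // i ∈ J \ K}, 𝒳 i.1) ×
        (Y × (∀ i : {i // i ∈ (J ∪ K)ᶜ}, 𝒳 i.1))) × (∀ i : {i // i ∈ K \ J}, 𝒳 i.1) =>
          w.1.2.1) hz) ?_
      funext i
      have hi : i.1 ∉ J ∩ K := Finset.mem_compl.1 i.2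
      by_cases hiJ : i.1 ∈ J
      · have hiK : i.1 ∉ K := fun hK => hi (Finset.mem_inter.2 ⟨hiJ, hK⟩)
        exact congrFun (congrArg (fun w : ((∀ i : {i // i ∈ J \ K}, 𝒳 i.1) ×
          (Y × (∀ i : {i // i ∈ (J ∪ K)ᶜ}, 𝒳 i.1))) × (∀ i : {i // i ∈ K \ J}, 𝒳 i.1) =>
            w.1.1) hz) ⟨i.1, Finset.mem_sdiff.2 ⟨hiJ, hiK⟩⟩
      · by_cases hiK : i.1 ∈ K
        · exact congrFun (congrArg Prod.snd hz) ⟨i.1, Finset.mem_sdiff.2 ⟨hiK, hiJ⟩⟩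
        · exact congrFun (congrArg (fun w : ((∀ i : {i // i ∈ J \ K}, 𝒳 i.1) ×
            (Y × (∀ i : {i // i ∈ (J ∪ K)ᶜ}, 𝒳 i.1))) × (∀ i : {i // i ∈ K \ J}, 𝒳 i.1) =>
              w.1.2.2) hz)
            ⟨i.1, Finset.mem_compl.2 fun hm => (Finset.mem_union.1 hm).elim hiJ hiK⟩
    rw [eK, eJ, eI] at H
    linarith
end

section
/- Let f be the rank function of a matroid on the ground set E_m = {1,…,m}. Then every extreme point (vertex) of the polytope {(R_1,…,R_m) ∈ ℝ^m : R_i ≥ 0 for all i, and Σ_{i∈J} R_i ≤ f(J) for all J ⊆ E_m} lies in {0,1}^m. -/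
/-!
Polar codes for the m-user MAC (Abbe–Telatar), Statement 7:
If `f` is the rank function of a matroid on `E_m = {1,…,m}`, then every extreme point of
the polytope `{R ∈ ℝ^m : R_i ≥ 0, Σ_{i∈J} R_i ≤ f(J) for all J ⊆ E_m}` lies in `{0,1}^m`.
-/

theorem statement7 {m : ℕ} (f : Finset (Fin m) → ℤ)
    (h0 : f ∅ = 0)
    (hmono : ∀ J K : Finset (Fin m), J ⊆ K → f J ≤ f K)
    (hsub : ∀ J K : Finset (Fin m), f (J ∪ K) + f (J ∩ K) ≤ f J + f K)
    (hcard : ∀ J : Finset (Fin m), f J ≤ J.card) :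
    ∀ x ∈ Set.extremePoints ℝ
        {R : Fin m → ℝ | (∀ i, 0 ≤ R i) ∧
          ∀ J : Finset (Fin m), ∑ i ∈ J, R i ≤ (f J : ℝ)},
      ∀ i, x i = 0 ∨ x i = 1 := by
  classical
  rintro x ⟨⟨hx0, hxJ⟩, hext⟩ i
  by_contra hi
  push_neg at hi
  obtain ⟨hi0, hi1⟩ := hi
  -- all coordinates are in [0,1]
  have hxle1 : ∀ k, x k ≤ 1 := by
    intro k
    have h1 := hxJ {k}
    have h2 := hcard {k}
    simp only [Finset.sum_singleton, Finset.card_singleton] at h1 h2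
    have : (f {k} : ℝ) ≤ 1 := by exact_mod_cast h2
    linarith
  have hifrac : 0 < x i ∧ x i < 1 := by
    constructor
    · exact lt_of_le_of_ne (hx0 i) (Ne.symm hi0)
    · exact lt_of_le_of_ne (hxle1 i) hi1
  -- a helper producing a contradiction from a nontrivial midpoint representation
  have contra : ∀ y z : Fin m → ℝ,
      ((∀ a, 0 ≤ y a) ∧ ∀ J : Finset (Fin m), ∑ a ∈ J, y a ≤ (f J : ℝ)) →
      ((∀ a, 0 ≤ z a) ∧ ∀ J : Finset (Fin m), ∑ a ∈ J, z a ≤ (f J : ℝ)) →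
      (∀ a, y a + z a = 2 * x a) → y ≠ x → False := by
    intro y z hy hz hsum hne
    refine hne (hext hy hz ⟨1/2, 1/2, by norm_num, by norm_num, by norm_num, ?_⟩)
    funext a
    have := hsum a
    simp only [Pi.add_apply, Pi.smul_apply, smul_eq_mul]
    linarith
  -- tight sets
  set tight : Finset (Fin m) → Prop := fun J => ∑ a ∈ J, x a = (f J : ℝ) with htight
  have tight_inter : ∀ J K, tight J → tight K → tight (J ∩ K) := by
    intro J K hJ hK
    have h1 : ∑ a ∈ J ∪ K, x a + ∑ a ∈ J ∩ K, x a = ∑ a ∈ J, x a + ∑ a ∈ K, x a :=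
      Finset.sum_union_inter
    have h2 := hxJ (J ∪ K)
    have h3 := hxJ (J ∩ K)
    have h4 : (f (J ∪ K) : ℝ) + (f (J ∩ K) : ℝ) ≤ (f J : ℝ) + (f K : ℝ) := by
      exact_mod_cast hsub J K
    simp only [htight] at hJ hK ⊢
    linarith
  -- sum of 0/1 values is an integer
  have int_sum : ∀ s : Finset (Fin m), (∀ a ∈ s, x a = 0 ∨ x a = 1) →
      ∃ n : ℤ, ∑ a ∈ s, x a = (n : ℝ) := by
    intro s
    induction s using Finset.induction_on with
    | empty => intro _; exact ⟨0, by simp⟩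
    | insert a s hnotmem ih =>
      intro h
      obtain ⟨n, hn⟩ := ih (fun b hb => h b (Finset.mem_insert_of_mem hb))
      rcases h a (Finset.mem_insert_self a s) with h1 | h1
      · exact ⟨n, by rw [Finset.sum_insert hnotmem, h1, hn]; ring⟩
      · exact ⟨n + 1, by rw [Finset.sum_insert hnotmem, h1, hn]; push_cast; ring⟩
  -- the family of tight sets containing k, and its intersection T k
  set fam : Fin m → Finset (Finset (Fin m)) :=
    fun k => Finset.univ.filter (fun J => tight J ∧ k ∈ J) with hfam
  set T : Fin m → Finset (Fin m) := fun k => (fam k).inf id with hT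
  have inf_tight : ∀ (S : Finset (Finset (Fin m))) (hS : S.Nonempty) (k : Fin m),
      (∀ J ∈ S, tight J ∧ k ∈ J) → tight (S.inf id) ∧ k ∈ S.inf id := by
    intro S hS
    induction hS using Finset.Nonempty.cons_induction with
    | singleton J =>
      intro k h
      simpa using h J (Finset.mem_singleton_self J)
    | cons J S hJS hS ih =>
      intro k h
      have h1 := h J (Finset.mem_cons_self J S)
      have h2 := ih k (fun K hK => h K (Finset.mem_cons_of_mem hK))
      rw [Finset.inf_cons]
      exact ⟨tight_inter _ _ h1.1 h2.1, Finset.mem_inter.mpr ⟨h1.2, h2.2⟩⟩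
  -- Case 1: some fractional coordinate lies in no tight set
  by_cases hcase : ∀ k, (0 < x k ∧ x k < 1) → (fam k).Nonempty
  case neg =>
    push_neg at hcase
    obtain ⟨k, hkfrac, hkempty⟩ := hcase
    have hnt : ∀ J : Finset (Fin m), k ∈ J → ∑ a ∈ J, x a < (f J : ℝ) := by
      intro J hkJ
      refine lt_of_le_of_ne (hxJ J) ?_
      intro heq
      have : J ∈ fam k := by
        simp only [hfam, Finset.mem_filter, Finset.mem_univ, true_and]
        exact ⟨heq, hkJ⟩
      rw [hkempty] at this
      exact absurd this (Finset.notMem_empty J)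
    set s : Finset (Finset (Fin m)) := Finset.univ.filter (fun J => k ∈ J) with hs
    have hsne : s.Nonempty := ⟨{k}, by simp [hs]⟩
    set δ : ℝ := s.inf' hsne (fun J => (f J : ℝ) - ∑ a ∈ J, x a) with hδ
    have hδpos : 0 < δ := by
      rw [hδ, Finset.lt_inf'_iff]
      intro J hJ
      simp only [hs, Finset.mem_filter] at hJ
      linarith [hnt J hJ.2]
    set ε : ℝ := min δ (x k) with hε
    have hεpos : 0 < ε := lt_min hδpos hkfrac.1
    have hsumy : ∀ J : Finset (Fin m),
        ∑ a ∈ J, (x a + if a = k then ε else 0) =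
          ∑ a ∈ J, x a + (if k ∈ J then ε else 0) := by
      intro J
      rw [Finset.sum_add_distrib, Finset.sum_ite_eq' J k (fun _ => ε)]
    have hsumz : ∀ J : Finset (Fin m),
        ∑ a ∈ J, (x a - if a = k then ε else 0) =
          ∑ a ∈ J, x a - (if k ∈ J then ε else 0) := by
      intro J
      rw [Finset.sum_sub_distrib, Finset.sum_ite_eq' J k (fun _ => ε)]
    refine contra (fun a => x a + if a = k then ε else 0)
      (fun a => x a - if a = k then ε else 0) ⟨?_, ?_⟩ ⟨?_, ?_⟩ ?_ ?_
    · intro a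
      split
      · linarith [hx0 a]
      · simpa using hx0 a
    · intro J
      rw [hsumy J]
      split
      · have hle : ε ≤ δ := min_le_left _ _
        have := Finset.inf'_le (fun J => (f J : ℝ) - ∑ a ∈ J, x a)
          (show J ∈ s by simp only [hs, Finset.mem_filter, Finset.mem_univ, true_and]; assumption)
        rw [← hδ] at this
        linarith
      · simpa using hxJ J
    · intro a
      split
      · rename_i h
        rw [h]
        have : ε ≤ x k := min_le_right _ _
        linarith
      · simpa using hx0 a
    · intro J
      rw [hsumz J]
      split
      · linarith [hxJ J, hεpos]
      · simpa using hxJ J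
    · intro a; ring
    · intro heq
      have := congrFun heq k
      simp at this
      linarith
  case pos =>
  -- Every fractional coordinate lies in some tight set.
  have Tprop : ∀ k, (0 < x k ∧ x k < 1) → tight (T k) ∧ k ∈ T k := by
    intro k hk
    exact inf_tight (fam k) (hcase k hk) k
      (fun J hJ => by simpa only [hfam, Finset.mem_filter, Finset.mem_univ, true_and] using hJ)
  have Tle : ∀ k (J : Finset (Fin m)), tight J → k ∈ J → T k ⊆ J := by
    intro k J hJ hkJ
    have : J ∈ fam k := by
      simp only [hfam, Finset.mem_filter, Finset.mem_univ, true_and]; exact ⟨hJ, hkJ⟩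
    simpa using Finset.inf_le (f := id) this
  -- pick fractional coordinate b with |T b| minimal
  set Fr : Finset (Fin m) := Finset.univ.filter (fun k => 0 < x k ∧ x k < 1) with hFr
  have hFrne : Fr.Nonempty := ⟨i, by simp [hFr]; exact hifrac⟩
  obtain ⟨b, hbFr, hbmin⟩ := Finset.exists_min_image Fr (fun k => (T k).card) hFrne
  have hbfrac : 0 < x b ∧ x b < 1 := by
    simpa [hFr] using hbFr
  obtain ⟨hTbtight, hbTb⟩ := Tprop b hbfrac
  -- find another fractional coordinate j in T b
  have hj : ∃ j ∈ T b, j ≠ b ∧ (0 < x j ∧ x j < 1) := by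
    by_contra hcon
    have h01 : ∀ a ∈ (T b).erase b, x a = 0 ∨ x a = 1 := by
      intro a ha
      rw [Finset.mem_erase] at ha
      by_contra hne
      push_neg at hne
      exact hcon ⟨a, ha.2, ha.1,
        lt_of_le_of_ne (hx0 a) (Ne.symm hne.1), lt_of_le_of_ne (hxle1 a) hne.2⟩
    obtain ⟨n, hn⟩ := int_sum _ h01
    have hsplit := Finset.add_sum_erase (T b) x hbTb
    have hxb : x b = ((f (T b) - n : ℤ) : ℝ) := by
      have := hTbtight
      simp only [htight] at this
      push_cast
      linarith
    have h1 : (0:ℝ) < ((f (T b) - n : ℤ) : ℝ) := by rw [← hxb]; exact hbfrac.1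
    have h2 : ((f (T b) - n : ℤ) : ℝ) < 1 := by rw [← hxb]; exact hbfrac.2
    have h1' : 0 < f (T b) - n := by exact_mod_cast h1
    have h2' : f (T b) - n < 1 := by exact_mod_cast h2
    omega
  obtain ⟨j, hjTb, hjb, hjfrac⟩ := hj
  obtain ⟨hTjtight, hjTj⟩ := Tprop j hjfrac
  -- T j = T b, hence every tight set contains both b and j, or neither
  have hTjsub : T j ⊆ T b := Tle j (T b) hTbtight hjTb
  have hTeq : T j = T b := by
    refine Finset.eq_of_subset_of_card_le hTjsub ?_
    exact hbmin j (by simp [hFr]; exact hjfrac)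
  have hbTj : b ∈ T j := hTeq ▸ hbTb
  have both : ∀ K : Finset (Fin m), tight K → (b ∈ K ↔ j ∈ K) := by
    intro K hK
    constructor
    · intro hbK; exact Tle b K hK hbK hjTb
    · intro hjK; exact Tle j K hK hjK hbTj
  -- split sets are not tight
  have hnt : ∀ J : Finset (Fin m), ¬(b ∈ J ↔ j ∈ J) → ∑ a ∈ J, x a < (f J : ℝ) := by
    intro J hJ
    refine lt_of_le_of_ne (hxJ J) ?_
    intro heq
    exact hJ (both J heq)
  set s : Finset (Finset (Fin m)) := Finset.univ.filter (fun J => ¬(b ∈ J ↔ j ∈ J)) with hs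
  have hsne : s.Nonempty := ⟨{b}, by simp [hs, hjb, Ne.symm hjb]⟩
  set δ : ℝ := s.inf' hsne (fun J => (f J : ℝ) - ∑ a ∈ J, x a) with hδ
  have hδpos : 0 < δ := by
    rw [hδ, Finset.lt_inf'_iff]
    intro J hJ
    simp only [hs, Finset.mem_filter] at hJ
    linarith [hnt J hJ.2]
  set ε : ℝ := min δ (min (x b) (x j)) with hε
  have hεpos : 0 < ε := lt_min hδpos (lt_min hbfrac.1 hjfrac.1)
  have hεδ : ε ≤ δ := min_le_left _ _
  have hεb : ε ≤ x b := le_trans (min_le_right _ _) (min_le_left _ _)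
  have hεj : ε ≤ x j := le_trans (min_le_right _ _) (min_le_right _ _)
  have hslack : ∀ J : Finset (Fin m), ¬(b ∈ J ↔ j ∈ J) → ∑ a ∈ J, x a + ε ≤ (f J : ℝ) := by
    intro J hJ
    have := Finset.inf'_le (fun J => (f J : ℝ) - ∑ a ∈ J, x a)
      (show J ∈ s by simp only [hs, Finset.mem_filter, Finset.mem_univ, true_and]; exact hJ)
    rw [← hδ] at this
    linarith
  have hsum : ∀ (t : ℝ) (J : Finset (Fin m)),
      ∑ a ∈ J, (x a + (if a = b then t else 0) - (if a = j then t else 0)) =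
        ∑ a ∈ J, x a + (if b ∈ J then t else 0) - (if j ∈ J then t else 0) := by
    intro t J
    rw [Finset.sum_sub_distrib, Finset.sum_add_distrib,
      Finset.sum_ite_eq' J b (fun _ => t), Finset.sum_ite_eq' J j (fun _ => t)]
  have hJbound : ∀ (t : ℝ), |t| ≤ ε → ∀ J : Finset (Fin m),
      ∑ a ∈ J, x a + (if b ∈ J then t else 0) - (if j ∈ J then t else 0) ≤ (f J : ℝ) := by
    intro t ht J
    by_cases hbJ : b ∈ J <;> by_cases hjJ : j ∈ J <;>
      simp only [hbJ, hjJ, if_pos, if_neg, if_true, if_false]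
    · linarith [hxJ J]
    · have := hslack J (by simp [hbJ, hjJ])
      have := abs_le.mp ht
      linarith
    · have := hslack J (by simp [hbJ, hjJ])
      have := abs_le.mp ht
      linarith
    · linarith [hxJ J]
  refine contra
    (fun a => x a + (if a = b then ε else 0) - (if a = j then ε else 0))
    (fun a => x a + (if a = b then -ε else 0) - (if a = j then -ε else 0)) ⟨?_, ?_⟩ ⟨?_, ?_⟩ ?_ ?_
  · intro a
    split_ifs with h1 h2 h2
    · exact absurd (h1.symm.trans h2).symm hjb
    · linarith [hx0 a]
    · subst h2; linarith
    · linarith [hx0 a]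
  · intro J
    rw [hsum ε J]
    exact hJbound ε (by rw [abs_of_pos hεpos]) J
  · intro a
    split_ifs with h1 h2 h2
    · exact absurd (h1.symm.trans h2).symm hjb
    · subst h1; linarith
    · linarith [hx0 a, hεpos]
    · linarith [hx0 a]
  · intro J
    rw [hsum (-ε) J]
    exact hJbound (-ε) (by rw [abs_neg, abs_of_pos hεpos]) J
  · intro a
    split_ifs <;> ring
  · intro heq
    have := congrFun heq b
    rw [if_pos rfl, if_neg (Ne.symm hjb)] at this
    linarith
end
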